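/- The improper integral ∫_0^∞ sin²((t-1)π/2)/(t²-1)² dt converges and equals π²/8. -/

import Mathlib

open MeasureTheory Real Set Filter Topology intervalIntegral



noncomputable def auxS (u : ℝ) : ℝ := Real.sin (u * π / 2) ^ 2

lemma auxS_nonneg (u : ℝ) : 0 ≤ auxS u := sq_nonneg _
lemma auxS_le_one (u : ℝ) : auxS u ≤ 1 := sin_sq_le_one _
lemma auxS_le_sq (u : ℝ) : auxS u ≤ (π/2)^2 * u^2 := by
  have := Real.sin_sq_le_sq (x := u * π / 2)
  calc auxS u ≤ (u * π / 2)^2 := this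
  _ = (π/2)^2 * u^2 := by ring
lemma auxS_neg (u : ℝ) : auxS (-u) = auxS u := by simp [auxS, neg_mul, neg_div]
lemma auxS_eq (u : ℝ) : auxS u = (1 - Real.cos (π * u)) / 2 := by
  have : Real.cos (π * u) = 1 - 2 * Real.sin (u * π / 2) ^ 2 := by
    rw [show π * u = 2 * (u * π / 2) by ring, Real.cos_two_mul', ← Real.sin_sq_add_cos_sq (u * π / 2)]
    ring
  rw [auxS, this]; ring
lemma auxS_shift (u : ℝ) : auxS (u + 2) = auxS u := by
  rw [auxS_eq, auxS_eq]
  rw [show π * (u + 2) = π * u + 2 * π by ring, Real.cos_add_two_pi]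
lemma auxS_cont : Continuous auxS := by unfold auxS; fun_prop

-- Laplace transform of cos(π u), for t > 0
lemma laplace_cos {t : ℝ} (ht : 0 < t) :
    ∫ u in Ioi (0:ℝ), Real.exp (-(t*u)) * Real.cos (π * u) = t / (t^2 + π^2) := by
  have hD : (0:ℝ) < t^2 + π^2 := by positivity
  set G : ℝ → ℝ := fun u => Real.exp (-(t*u)) * (π * Real.sin (π*u) - t * Real.cos (π*u)) / (t^2 + π^2) with hG
  have hderiv : ∀ u ∈ Ioi (0:ℝ), HasDerivAt G (Real.exp (-(t*u)) * Real.cos (π * u)) u := by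
    intro u _
    have h1 : HasDerivAt (fun u => Real.exp (-(t*u))) (-t * Real.exp (-(t*u))) u := by
      have := (Real.hasDerivAt_exp (-(t*u))).comp u (((hasDerivAt_id u).const_mul t).neg)
      simpa [mul_comm, Function.comp_def] using this
    have h2 : HasDerivAt (fun u => π * Real.sin (π*u) - t * Real.cos (π*u))
        (π * (Real.cos (π*u) * π) - t * (-Real.sin (π*u) * π)) u := by
      have hs : HasDerivAt (fun u : ℝ => Real.sin (π*u)) (Real.cos (π*u) * π) u := by
        simpa [Function.comp_def] using (Real.hasDerivAt_sin (π*u)).comp u ((hasDerivAt_id u).const_mul π)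
      have hc : HasDerivAt (fun u : ℝ => Real.cos (π*u)) (-Real.sin (π*u) * π) u := by
        simpa [Function.comp_def] using (Real.hasDerivAt_cos (π*u)).comp u ((hasDerivAt_id u).const_mul π)
      exact (hs.const_mul π).sub (hc.const_mul t)
    have := (h1.mul h2).div_const (t^2 + π^2)
    refine this.congr_deriv ?_
    rw [div_eq_iff hD.ne']
    ring
  have hint : IntegrableOn (fun u => Real.exp (-(t*u)) * Real.cos (π * u)) (Ioi (0:ℝ)) := by
    refine Integrable.mono' (exp_neg_integrableOn_Ioi 0 ht) ?_ ?_
    · apply Continuous.aestronglyMeasurable; fun_prop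
    · filter_upwards with u
      rw [norm_mul, Real.norm_eq_abs, Real.norm_eq_abs, Real.abs_exp, neg_mul]
      calc Real.exp (-(t*u)) * |Real.cos (π*u)| ≤ Real.exp (-(t*u)) * 1 := by
            gcongr; exact abs_cos_le_one _
      _ = Real.exp (-(t*u)) := mul_one _
  have htend : Tendsto G atTop (𝓝 0) := by
    have hb : Tendsto (fun u => Real.exp (-(t*u))) atTop (𝓝 0) := by
      have h0 : Tendsto (fun u : ℝ => -(t*u)) atTop atBot :=
        Filter.tendsto_neg_atTop_atBot.comp (tendsto_id.const_mul_atTop ht)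
      exact Real.tendsto_exp_atBot.comp h0
    have : Tendsto (fun u => Real.exp (-(t*u)) * ((π + t) / (t^2+π^2))) atTop (𝓝 (0 * ((π + t) / (t^2+π^2)))) :=
      hb.mul_const _
    rw [zero_mul] at this
    refine squeeze_zero_norm ?_ this
    intro u
    rw [hG]
    rw [Real.norm_eq_abs, abs_div, abs_of_pos hD, div_le_iff₀ hD]
    have : |Real.exp (-(t*u)) * (π * Real.sin (π*u) - t * Real.cos (π*u))|
        ≤ Real.exp (-(t*u)) * (π + t) := by
      rw [abs_mul, Real.abs_exp]
      gcongr
      calc |π * Real.sin (π*u) - t * Real.cos (π*u)| ≤ |π * Real.sin (π*u)| + |t * Real.cos (π*u)| := abs_sub _ _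
      _ ≤ π * 1 + t * 1 := by
          rw [abs_mul, abs_mul, abs_of_pos Real.pi_pos, abs_of_pos ht]
          gcongr
          · exact abs_sin_le_one _
          · exact abs_cos_le_one _
      _ = π + t := by ring
    calc |Real.exp (-(t*u)) * (π * Real.sin (π*u) - t * Real.cos (π*u))|
        ≤ Real.exp (-(t*u)) * (π + t) := this
    _ = Real.exp (-(t*u)) * ((π + t) / (t^2+π^2)) * (t^2+π^2) := by field_simp
  have hcont : ContinuousWithinAt G (Ici 0) 0 := by
    apply Continuous.continuousWithinAt; unfold G; fun_prop
  have := integral_Ioi_of_hasDerivAt_of_tendsto hcont hderiv hint htend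
  rw [this, hG]
  simp [Real.exp_zero]
  ring

lemma int_xexp : IntegrableOn (fun x : ℝ => x * Real.exp (-x)) (Ioi 0) := by
  have := Real.GammaIntegral_convergent (by norm_num : (0:ℝ) < 2)
  refine this.congr_fun (fun x hx => ?_) measurableSet_Ioi
  simp only [show (2:ℝ) - 1 = 1 by norm_num, Real.rpow_one]
  ring

lemma val_xexp : (∫ x in Ioi (0:ℝ), x * Real.exp (-x)) = 1 := by
  have := Real.Gamma_eq_integral (by norm_num : (0:ℝ) < 2)
  rw [Real.Gamma_two] at this
  rw [this]
  refine setIntegral_congr_fun measurableSet_Ioi (fun x hx => ?_)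
  rw [show (2:ℝ) - 1 = 1 by norm_num, Real.rpow_one]
  ring

lemma int_texp_scaled {u : ℝ} (hu : 0 < u) :
    IntegrableOn (fun t : ℝ => t * Real.exp (-(u*t))) (Ioi 0) := by
  have h : IntegrableOn (fun t : ℝ => (u*t) * Real.exp (-(u*t))) (Ioi 0) := by
    have := (integrableOn_Ioi_comp_mul_left_iff (fun x : ℝ => x * Real.exp (-x)) 0 hu).mpr
    simp only [mul_zero] at this
    exact this int_xexp
  have h2 : IntegrableOn (fun t : ℝ => u⁻¹ * ((u*t) * Real.exp (-(u*t)))) (Ioi 0) := h.const_mul _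
  refine h2.congr_fun (fun x hx => ?_) measurableSet_Ioi
  field_simp

lemma val_texp_scaled {u : ℝ} (hu : 0 < u) :
    (∫ t in Ioi (0:ℝ), t * Real.exp (-(u*t))) = 1/u^2 := by
  have h := integral_comp_mul_left_Ioi (fun x : ℝ => x * Real.exp (-x)) 0 hu
  simp only [mul_zero] at h
  rw [val_xexp, smul_eq_mul, mul_one] at h
  have : (∫ t in Ioi (0:ℝ), t * Real.exp (-(u*t))) = u⁻¹ * ∫ t in Ioi (0:ℝ), (u*t) * Real.exp (-(u*t)) := by
    rw [← MeasureTheory.integral_const_mul]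
    refine setIntegral_congr_fun measurableSet_Ioi (fun x hx => ?_)
    field_simp
  rw [this, h]
  field_simp


lemma laplace_exp {t : ℝ} (ht : 0 < t) : ∫ u in Ioi (0:ℝ), Real.exp (-(t*u)) = 1/t := by
  have := integral_comp_mul_left_Ioi (fun x => Real.exp (-x)) 0 ht
  simp only [mul_zero] at this
  rw [this, integral_exp_neg_Ioi_zero, smul_eq_mul, mul_one, one_div]

lemma int_expcos {t : ℝ} (ht : 0 < t) :
    IntegrableOn (fun u : ℝ => Real.exp (-(t*u)) * Real.cos (π * u)) (Ioi 0) := by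
  refine Integrable.mono' (exp_neg_integrableOn_Ioi 0 ht) ?_ ?_
  · apply Continuous.aestronglyMeasurable; fun_prop
  · filter_upwards with u
    rw [norm_mul, Real.norm_eq_abs, Real.norm_eq_abs, Real.abs_exp, neg_mul]
    calc Real.exp (-(t*u)) * |Real.cos (π*u)| ≤ Real.exp (-(t*u)) * 1 := by
          gcongr; exact abs_cos_le_one _
    _ = Real.exp (-(t*u)) := mul_one _

lemma int_sexp {t : ℝ} (ht : 0 < t) :
    IntegrableOn (fun u : ℝ => auxS u * Real.exp (-(u*t))) (Ioi 0) := by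
  refine Integrable.mono' (exp_neg_integrableOn_Ioi 0 ht) ?_ ?_
  · exact (auxS_cont.mul (by fun_prop)).aestronglyMeasurable
  · filter_upwards with u
    rw [norm_mul, Real.norm_eq_abs, Real.norm_eq_abs, Real.abs_exp, neg_mul,
      abs_of_nonneg (auxS_nonneg u), mul_comm u t]
    calc auxS u * Real.exp (-(t*u)) ≤ 1 * Real.exp (-(t*u)) := by
          gcongr; exact auxS_le_one u
    _ = Real.exp (-(t*u)) := one_mul _

lemma val_sexp {t : ℝ} (ht : 0 < t) :
    (∫ u in Ioi (0:ℝ), auxS u * Real.exp (-(u*t))) = (1/t - t/(t^2+π^2))/2 := by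
  have hint1 : IntegrableOn (fun u : ℝ => Real.exp (-(t*u))) (Ioi 0) := by
    have := exp_neg_integrableOn_Ioi 0 ht
    simpa [neg_mul] using this
  have key : ∀ u ∈ Ioi (0:ℝ), auxS u * Real.exp (-(u*t))
      = (Real.exp (-(t*u)) - Real.exp (-(t*u)) * Real.cos (π * u)) / 2 := by
    intro u _
    rw [auxS_eq, mul_comm u t]
    ring
  rw [setIntegral_congr_fun measurableSet_Ioi key]
  rw [MeasureTheory.integral_div, integral_sub hint1 (int_expcos ht), laplace_exp ht, laplace_cos ht]

-- integrability of g u = auxS u / u^2 on Ioi 0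
lemma int_g : IntegrableOn (fun u : ℝ => auxS u / u^2) (Ioi 0) := by
  have hmeasG : Measurable (fun u : ℝ => auxS u / u^2) :=
    (auxS_cont.measurable).div ((measurable_id.pow_const 2))
  have hmeas : ∀ s : Set ℝ, AEStronglyMeasurable (fun u : ℝ => auxS u / u^2) (volume.restrict s) :=
    fun s => hmeasG.aestronglyMeasurable
  rw [show Ioi (0:ℝ) = Ioc 0 1 ∪ Ioi 1 by rw [Ioc_union_Ioi_eq_Ioi zero_le_one]]
  rw [integrableOn_union]
  constructor
  · refine Measure.integrableOn_of_bounded (M := (π/2)^2) (by simp) hmeasG.aestronglyMeasurable ?_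
    rw [ae_restrict_iff' measurableSet_Ioc]
    filter_upwards with u hu
    rw [Real.norm_eq_abs, abs_div, abs_of_nonneg (auxS_nonneg u), abs_of_nonneg (by positivity : (0:ℝ) ≤ u^2)]
    rw [div_le_iff₀ (by nlinarith [hu.1] : (0:ℝ) < u^2)]
    calc auxS u ≤ (π/2)^2 * u^2 := auxS_le_sq u
    _ = (π/2)^2 * u^2 := by ring
  · have hbase : IntegrableOn (fun u : ℝ => u⁻¹^2) (Ioi 1) := by
      have := integrableOn_Ioi_rpow_of_lt (by norm_num : (-2:ℝ) < -1) (by norm_num : (0:ℝ) < 1)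
      refine this.congr_fun (fun x hx => ?_) measurableSet_Ioi
      have hx0 : (0:ℝ) < x := lt_trans one_pos hx
      beta_reduce
      rw [Real.rpow_neg hx0.le, show (2:ℝ)=((2:ℕ):ℝ) by norm_num, Real.rpow_natCast, inv_pow]
    refine Integrable.mono' hbase (hmeas _) ?_
    rw [ae_restrict_iff' measurableSet_Ioi]
    filter_upwards with u hu
    have hu0 : (0:ℝ) < u := lt_trans one_pos hu
    rw [Real.norm_eq_abs, abs_div, abs_of_nonneg (auxS_nonneg u), abs_of_nonneg (by positivity : (0:ℝ) ≤ u^2)]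
    rw [div_le_iff₀ (by positivity), inv_pow]
    rw [inv_mul_cancel₀ (by positivity : (u^2) ≠ 0)]
    exact auxS_le_one u


noncomputable def auxF (u t : ℝ) : ℝ := auxS u * (t * Real.exp (-(u*t)))

lemma val_g : (∫ u in Ioi (0:ℝ), auxS u / u^2) = π^2/4 := by
  have hμ : (volume.restrict (Ioi (0:ℝ))) = volume.restrict (Ioi (0:ℝ)) := rfl
  set μ := volume.restrict (Ioi (0:ℝ)) with hμdef
  set F := auxF with hF
  have hFdef : ∀ u t, F u t = auxS u * (t * Real.exp (-(u*t))) := fun u t => rfl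
  have hFm : AEStronglyMeasurable (Function.uncurry F) (μ.prod μ) := by
    apply Continuous.aestronglyMeasurable
    apply Continuous.mul (auxS_cont.comp continuous_fst)
    fun_prop
  have hsec : ∀ᵐ u ∂μ, Integrable (F u) μ := by
    rw [hμdef, ae_restrict_iff' measurableSet_Ioi]
    filter_upwards with u hu
    have : IntegrableOn (fun t => auxS u * (t * Real.exp (-(u*t)))) (Ioi 0) :=
      (int_texp_scaled hu).const_mul _
    exact this
  have hnorm : ∀ᵐ u ∂μ, (∫ t, ‖F u t‖ ∂μ) = auxS u / u^2 := by
    rw [hμdef, ae_restrict_iff' measurableSet_Ioi]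
    filter_upwards with u hu
    have h1 : (∫ t, ‖F u t‖ ∂μ) = ∫ t, F u t ∂μ := by
      rw [hμdef]
      refine setIntegral_congr_fun measurableSet_Ioi (fun t ht => ?_)
      have hnn : 0 ≤ F u t := by
        rw [hFdef]
        have := auxS_nonneg u
        have ht' : (0:ℝ) < t := ht
        positivity
      rw [Real.norm_eq_abs, abs_of_nonneg hnn]
    rw [h1, hμdef]
    simp only [hFdef]
    rw [MeasureTheory.integral_const_mul, val_texp_scaled hu]
    ring
  have hint : Integrable (Function.uncurry F) (μ.prod μ) := by
    rw [integrable_prod_iff hFm]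
    refine ⟨hsec, ?_⟩
    have hnorm' : (fun u => ∫ t, ‖F u t‖ ∂μ) =ᵐ[μ] (fun u => auxS u / u^2) := hnorm
    exact (int_g.congr hnorm'.symm : Integrable _ μ)
  have hswap := integral_integral_swap hint
  have hL : (∫ u, ∫ t, F u t ∂μ ∂μ) = ∫ u in Ioi (0:ℝ), auxS u / u^2 := by
    rw [hμdef]
    refine setIntegral_congr_fun measurableSet_Ioi (fun u hu => ?_)
    simp only [hFdef]
    rw [MeasureTheory.integral_const_mul, val_texp_scaled hu]
    ring
  have hR : (∫ t, ∫ u, F u t ∂μ ∂μ) = ∫ t in Ioi (0:ℝ), (1/2) * (1 + (π⁻¹*t)^2)⁻¹ := by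
    rw [hμdef]
    refine setIntegral_congr_fun measurableSet_Ioi (fun t ht => ?_)
    have ht' : (0:ℝ) < t := ht
    have hD : (0:ℝ) < t^2 + π^2 := by positivity
    have : (∫ u, F u t ∂μ) = t * ∫ u in Ioi (0:ℝ), auxS u * Real.exp (-(u*t)) := by
      rw [hμdef, ← MeasureTheory.integral_const_mul]
      refine setIntegral_congr_fun measurableSet_Ioi (fun u hu => ?_)
      simp only [hFdef]; ring
    rw [this, val_sexp ht']
    have hπ : (0:ℝ) < π := Real.pi_pos
    field_simp
    ring
  have hval : (∫ t in Ioi (0:ℝ), (1/2) * (1 + (π⁻¹*t)^2)⁻¹) = π^2/4 := by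
    rw [MeasureTheory.integral_const_mul]
    have h := integral_comp_mul_left_Ioi (fun x : ℝ => (1 + x^2)⁻¹) 0 (by positivity : (0:ℝ) < π⁻¹)
    simp only [mul_zero] at h
    rw [h, integral_Ioi_inv_one_add_sq, smul_eq_mul]
    rw [Real.arctan_zero]
    have hπ : (0:ℝ) < π := Real.pi_pos
    field_simp
    ring
  rw [← hL, hswap, hR, hval]


noncomputable def auxG (u : ℝ) : ℝ := auxS u / u^2
noncomputable def auxH (u : ℝ) : ℝ := auxS u / u

lemma auxS_le_abs (u : ℝ) : auxS u ≤ π/2 * |u| := by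
  have h1 : |Real.sin (u * π / 2)| ≤ 1 := abs_sin_le_one _
  have h2 : |Real.sin (u * π / 2)| ≤ |u * π / 2| := abs_sin_le_abs
  calc auxS u = |Real.sin (u * π / 2)| * |Real.sin (u * π / 2)| := by
        rw [auxS, ← abs_mul, ← sq, abs_of_nonneg (sq_nonneg _)]
  _ ≤ |u * π / 2| * 1 := mul_le_mul h2 h1 (abs_nonneg _) (abs_nonneg _)
  _ = π/2 * |u| := by
        rw [mul_one, abs_div, abs_mul, abs_of_pos Real.pi_pos, abs_of_pos (by norm_num : (0:ℝ) < 2)]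
        ring

lemma auxS_two : auxS 2 = 0 := by
  simp [auxS, show (2:ℝ) * π / 2 = π by ring]

lemma auxG_meas : Measurable auxG := auxS_cont.measurable.div (measurable_id.pow_const 2)
lemma auxH_meas : Measurable auxH := auxS_cont.measurable.div measurable_id

lemma auxG_abs_le (u : ℝ) : |auxG u| ≤ π^2/4 := by
  rcases eq_or_ne u 0 with rfl | hu
  · simp [auxG]
    positivity
  · rw [auxG, abs_div, abs_of_nonneg (auxS_nonneg u), abs_of_nonneg (sq_nonneg u),
      div_le_iff₀ (by positivity : (0:ℝ) < u^2)]
    calc auxS u ≤ (π/2)^2 * u^2 := auxS_le_sq u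
    _ = π^2/4 * u^2 := by ring

lemma auxH_abs_le (u : ℝ) : |auxH u| ≤ π/2 := by
  rcases eq_or_ne u 0 with rfl | hu
  · simp [auxH]
    positivity
  · rw [auxH, abs_div, abs_of_nonneg (auxS_nonneg u),
      div_le_iff₀ (abs_pos.mpr hu)]
    exact auxS_le_abs u

lemma auxG_even (u : ℝ) : auxG (-u) = auxG u := by
  rw [auxG, auxG, auxS_neg, neg_pow]
  norm_num
lemma auxH_odd (u : ℝ) : auxH (-u) = - auxH u := by rw [auxH, auxH, auxS_neg]; ring

-- pointwise identity
lemma key_identity (t : ℝ) :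
    Real.sin ((t - 1) * π / 2) ^ 2 / (t ^ 2 - 1) ^ 2
      = (auxG (t-1) + auxG (t+1) + auxH (t+1) - auxH (t-1)) / 4 := by
  have hS : auxS (t+1) = auxS (t-1) := by
    rw [show t + 1 = (t-1) + 2 by ring, auxS_shift]
  have hnum : Real.sin ((t - 1) * π / 2) ^ 2 = auxS (t-1) := rfl
  rcases eq_or_ne t 1 with rfl | h1
  · norm_num [auxG, auxH, auxS, auxS_two]
  rcases eq_or_ne t (-1) with rfl | h2
  · have hm2 : auxS (-2) = 0 := by
      rw [show (-2:ℝ) = -(2:ℝ) by norm_num, auxS_neg, auxS_two]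
    rw [hnum, show (-1:ℝ) - 1 = -2 by norm_num, show (-1:ℝ) + 1 = 0 by norm_num,
      auxG, auxG, auxH, auxH, hm2]
    norm_num [auxS]
  · have hm : t - 1 ≠ 0 := sub_ne_zero.mpr h1
    have hp : t + 1 ≠ 0 := by intro h; apply h2; linarith [h]
    rw [hnum, auxG, auxG, auxH, auxH, hS]
    have hd : t^2 - 1 = (t-1)*(t+1) := by ring
    rw [hd]
    field_simp
    ring


-- bounded measurable functions are integrable on bounded sets / intervals
lemma intInt_of_bdd {f : ℝ → ℝ} (hm : Measurable f) {C : ℝ} (hC : ∀ x, |f x| ≤ C)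
    (a b : ℝ) : IntervalIntegrable f volume a b := by
  rw [intervalIntegrable_iff]
  refine Measure.integrableOn_of_bounded (M := C) ?_ hm.aestronglyMeasurable ?_
  · exact ne_of_lt (measure_Ioc_lt_top)
  · filter_upwards with x
    exact hC x

lemma intOn_of_bdd {f : ℝ → ℝ} (hm : Measurable f) {C : ℝ} (hC : ∀ x, |f x| ≤ C)
    (a b : ℝ) : IntegrableOn f (Ioc a b) := by
  refine Measure.integrableOn_of_bounded (M := C) ?_ hm.aestronglyMeasurable ?_
  · exact ne_of_lt (measure_Ioc_lt_top)
  · filter_upwards with x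
    exact hC x

lemma int_g' : IntegrableOn auxG (Ioi 0) := int_g
lemma int_g_Ioi1 : IntegrableOn auxG (Ioi 1) := int_g'.mono_set (Ioi_subset_Ioi zero_le_one)
lemma int_g_Ioim1 : IntegrableOn auxG (Ioi (-1)) := by
  rw [show Ioi (-1:ℝ) = Ioc (-1) 0 ∪ Ioi 0 by rw [Ioc_union_Ioi_eq_Ioi (by norm_num : (-1:ℝ) ≤ 0)]]
  exact (intOn_of_bdd auxG_meas auxG_abs_le _ _).union int_g'

lemma int_gshift (c : ℝ) : ∀ a b : ℝ, IntervalIntegrable (fun t => auxG (t + c)) volume a b :=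
  fun a b => intInt_of_bdd (auxG_meas.comp (measurable_id.add_const c)) (fun x => auxG_abs_le _) a b
lemma int_gshift' (c : ℝ) : ∀ a b : ℝ, IntervalIntegrable (fun t => auxG (t - c)) volume a b :=
  fun a b => intInt_of_bdd (auxG_meas.comp (measurable_id.sub_const c)) (fun x => auxG_abs_le _) a b
lemma int_hshift (c : ℝ) : ∀ a b : ℝ, IntervalIntegrable (fun t => auxH (t + c)) volume a b :=
  fun a b => intInt_of_bdd (auxH_meas.comp (measurable_id.add_const c)) (fun x => auxH_abs_le _) a b
lemma int_hshift' (c : ℝ) : ∀ a b : ℝ, IntervalIntegrable (fun t => auxH (t - c)) volume a b :=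
  fun a b => intInt_of_bdd (auxH_meas.comp (measurable_id.sub_const c)) (fun x => auxH_abs_le _) a b
lemma int_h : ∀ a b : ℝ, IntervalIntegrable auxH volume a b :=
  fun a b => intInt_of_bdd auxH_meas auxH_abs_le a b
lemma int_gI : ∀ a b : ℝ, IntervalIntegrable auxG volume a b :=
  fun a b => intInt_of_bdd auxG_meas auxG_abs_le a b

-- odd integral zero
lemma h_odd_zero : (∫ u in (-1:ℝ)..1, auxH u) = 0 := by
  have h := integral_comp_neg (a := (-1:ℝ)) (b := 1) (fun u => auxH u)
  simp only [auxH_odd] at h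
  rw [intervalIntegral.integral_neg] at h
  have : -(∫ u in (-1:ℝ)..1, auxH u) = ∫ u in (-1:ℝ)..1, auxH u := by
    rw [h]; norm_num
  linarith [this]

-- even reflection
lemma g_reflect : (∫ u in (-1:ℝ)..0, auxG u) = ∫ u in (0:ℝ)..1, auxG u := by
  have h := integral_comp_neg (a := (0:ℝ)) (b := 1) (fun u => auxG u)
  simp only [auxG_even] at h
  norm_num at h
  rw [← h]

-- the interval computation
lemma interval_eq (R : ℝ) :
    (∫ t in (0:ℝ)..R, Real.sin ((t - 1) * π / 2) ^ 2 / (t ^ 2 - 1) ^ 2)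
      = ((∫ u in (-1:ℝ)..(R-1), auxG u) + (∫ u in (1:ℝ)..(R+1), auxG u)
          + ∫ u in (R-1)..(R+1), auxH u) / 4 := by
  have e1 : (∫ t in (0:ℝ)..R, auxG (t - 1)) = ∫ u in (-1:ℝ)..(R-1), auxG u := by
    rw [integral_comp_sub_right]
    congr 1
    norm_num
  have e2 : (∫ t in (0:ℝ)..R, auxG (t + 1)) = ∫ u in (1:ℝ)..(R+1), auxG u := by
    rw [integral_comp_add_right]
    congr 1
    norm_num
  have e3 : (∫ t in (0:ℝ)..R, auxH (t + 1)) = ∫ u in (1:ℝ)..(R+1), auxH u := by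
    rw [integral_comp_add_right]
    congr 1
    norm_num
  have e4 : (∫ t in (0:ℝ)..R, auxH (t - 1)) = ∫ u in (-1:ℝ)..(R-1), auxH u := by
    rw [integral_comp_sub_right]
    congr 1
    norm_num
  have hsplit1 : (∫ u in (-1:ℝ)..(R-1), auxH u) + (∫ u in (R-1)..(R+1), auxH u)
      = ∫ u in (-1:ℝ)..(R+1), auxH u :=
    integral_add_adjacent_intervals (int_h _ _) (int_h _ _)
  have hsplit2 : (∫ u in (-1:ℝ)..(1:ℝ), auxH u) + (∫ u in (1:ℝ)..(R+1), auxH u)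
      = ∫ u in (-1:ℝ)..(R+1), auxH u :=
    integral_add_adjacent_intervals (int_h _ _) (int_h _ _)
  have hdiff : (∫ u in (1:ℝ)..(R+1), auxH u) - (∫ u in (-1:ℝ)..(R-1), auxH u)
      = ∫ u in (R-1)..(R+1), auxH u := by
    have := h_odd_zero
    linarith [hsplit1, hsplit2]
  calc (∫ t in (0:ℝ)..R, Real.sin ((t - 1) * π / 2) ^ 2 / (t ^ 2 - 1) ^ 2)
      = ∫ t in (0:ℝ)..R, (auxG (t - 1) + auxG (t + 1) + auxH (t + 1) - auxH (t - 1)) / 4 := by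
        refine intervalIntegral.integral_congr (fun t _ => ?_)
        exact key_identity t
  _ = ((∫ t in (0:ℝ)..R, auxG (t - 1)) + (∫ t in (0:ℝ)..R, auxG (t + 1))
        + ((∫ t in (0:ℝ)..R, auxH (t + 1)) - ∫ t in (0:ℝ)..R, auxH (t - 1))) / 4 := by
        rw [intervalIntegral.integral_div]
        congr 1
        rw [intervalIntegral.integral_sub (((int_gshift' _ _ _).add (int_gshift _ _ _)).add (int_hshift _ _ _)) (int_hshift' _ _ _),
          intervalIntegral.integral_add ((int_gshift' _ _ _).add (int_gshift _ _ _)) (int_hshift _ _ _),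
          intervalIntegral.integral_add (int_gshift' _ _ _) (int_gshift _ _ _)]
        ring
  _ = ((∫ u in (-1:ℝ)..(R-1), auxG u) + (∫ u in (1:ℝ)..(R+1), auxG u)
          + ∫ u in (R-1)..(R+1), auxH u) / 4 := by
        rw [e1, e2, e3, e4, hdiff]


lemma f_meas : Measurable (fun t : ℝ => Real.sin ((t - 1) * π / 2) ^ 2 / (t ^ 2 - 1) ^ 2) := by
  fun_prop

lemma f_bound {t : ℝ} (ht : 0 < t) :
    |Real.sin ((t - 1) * π / 2) ^ 2 / (t ^ 2 - 1) ^ 2| ≤ π^2/4 * ((t+1)^2)⁻¹ := by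
  have ht1 : (0:ℝ) < t + 1 := by linarith
  rcases eq_or_ne t 1 with rfl | h1
  · norm_num
    positivity
  · have hm : t - 1 ≠ 0 := sub_ne_zero.mpr h1
    have hden : (t^2 - 1)^2 = (t-1)^2 * (t+1)^2 := by ring
    have hdpos : (0:ℝ) < (t-1)^2 * (t+1)^2 := by positivity
    have hnum : Real.sin ((t - 1) * π / 2) ^ 2 = auxS (t-1) := rfl
    rw [hnum, hden, abs_div, abs_of_nonneg (auxS_nonneg _), abs_of_pos hdpos,
      div_le_iff₀ hdpos]
    calc auxS (t-1) ≤ (π/2)^2 * (t-1)^2 := auxS_le_sq _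
    _ = π^2/4 * ((t+1)^2)⁻¹ * ((t-1)^2 * (t+1)^2) := by
        field_simp
        ring

lemma int_f : IntegrableOn (fun t : ℝ => Real.sin ((t - 1) * π / 2) ^ 2 / (t ^ 2 - 1) ^ 2) (Ioi 0) := by
  rw [show Ioi (0:ℝ) = Ioc 0 1 ∪ Ioi 1 by rw [Ioc_union_Ioi_eq_Ioi zero_le_one]]
  rw [integrableOn_union]
  constructor
  · refine Measure.integrableOn_of_bounded (M := π^2/4) (by simp) f_meas.aestronglyMeasurable ?_
    rw [ae_restrict_iff' measurableSet_Ioc]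
    filter_upwards with t htm
    have ht : 0 < t := htm.1
    calc ‖Real.sin ((t - 1) * π / 2) ^ 2 / (t ^ 2 - 1) ^ 2‖ ≤ π^2/4 * ((t+1)^2)⁻¹ := f_bound ht
    _ ≤ π^2/4 * 1 := by
        gcongr
        rw [inv_le_one_iff₀]
        right
        nlinarith [ht.le]
    _ = π^2/4 := mul_one _
  · have hbase : IntegrableOn (fun u : ℝ => u⁻¹^2) (Ioi 1) := by
      have := integrableOn_Ioi_rpow_of_lt (by norm_num : (-2:ℝ) < -1) (by norm_num : (0:ℝ) < 1)
      refine this.congr_fun (fun x hx => ?_) measurableSet_Ioi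
      have hx0 : (0:ℝ) < x := lt_trans one_pos hx
      beta_reduce
      rw [Real.rpow_neg hx0.le, show (2:ℝ)=((2:ℕ):ℝ) by norm_num, Real.rpow_natCast, inv_pow]
    refine Integrable.mono' (hbase.const_mul (π^2/4)) f_meas.aestronglyMeasurable ?_
    rw [ae_restrict_iff' measurableSet_Ioi]
    filter_upwards with t htm
    have ht1 : (1:ℝ) < t := htm
    have ht : 0 < t := lt_trans one_pos ht1
    calc ‖Real.sin ((t - 1) * π / 2) ^ 2 / (t ^ 2 - 1) ^ 2‖ ≤ π^2/4 * ((t+1)^2)⁻¹ := f_bound ht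
    _ ≤ π^2/4 * (t⁻¹^2) := by
        gcongr
        rw [inv_pow]
        apply inv_anti₀ (by positivity)
        nlinarith [ht.le]

lemma auxH_bound_far {R x : ℝ} (hR : 2 ≤ R) (hx : x ∈ Set.uIoc (R-1) (R+1)) :
    ‖auxH x‖ ≤ (R-1)⁻¹ := by
  rw [Set.uIoc_of_le (by linarith : R - 1 ≤ R + 1)] at hx
  have hx1 : R - 1 < x := hx.1
  have hxpos : (0:ℝ) < x := by linarith
  have hR1 : (0:ℝ) < R - 1 := by linarith
  rw [Real.norm_eq_abs, auxH, abs_div, abs_of_nonneg (auxS_nonneg _), abs_of_pos hxpos,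
    div_le_iff₀ hxpos]
  calc auxS x ≤ 1 := auxS_le_one x
  _ ≤ (R-1)⁻¹ * x := by
      rw [← div_le_iff₀' (by positivity), one_div, inv_inv]
      linarith

lemma main_value :
    (∫ t in Ioi (0:ℝ), Real.sin ((t - 1) * π / 2) ^ 2 / (t ^ 2 - 1) ^ 2) = π^2/8 := by
  set Jg := ∫ u in Ioi (-1:ℝ), auxG u with hJg
  set Kg := ∫ u in Ioi (1:ℝ), auxG u with hKg
  -- limits
  have hsub : Tendsto (fun R : ℝ => R - 1) atTop atTop := by
    have := tendsto_atTop_add_const_right atTop (-1 : ℝ) tendsto_id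
    simpa [sub_eq_add_neg] using this
  have hadd : Tendsto (fun R : ℝ => R + 1) atTop atTop :=
    tendsto_atTop_add_const_right atTop (1 : ℝ) tendsto_id
  have T1 : Tendsto (fun R : ℝ => ∫ u in (-1:ℝ)..(R-1), auxG u) atTop (𝓝 Jg) :=
    intervalIntegral_tendsto_integral_Ioi (-1) int_g_Ioim1 hsub
  have T2 : Tendsto (fun R : ℝ => ∫ u in (1:ℝ)..(R+1), auxG u) atTop (𝓝 Kg) :=
    intervalIntegral_tendsto_integral_Ioi 1 int_g_Ioi1 hadd
  have T3 : Tendsto (fun R : ℝ => ∫ u in (R-1)..(R+1), auxH u) atTop (𝓝 0) := by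
    have hb : Tendsto (fun R : ℝ => (R-1)⁻¹ * 2) atTop (𝓝 0) := by
      have := (hsub.inv_tendsto_atTop).mul_const (2:ℝ)
      simpa using this
    refine squeeze_zero_norm' ?_ hb
    filter_upwards [eventually_ge_atTop (2:ℝ)] with R hR
    have := intervalIntegral.norm_integral_le_of_norm_le_const
      (C := (R-1)⁻¹) (f := auxH) (a := R-1) (b := R+1) (fun x hx => auxH_bound_far hR hx)
    calc ‖∫ u in (R-1)..(R+1), auxH u‖ ≤ (R-1)⁻¹ * |(R+1) - (R-1)| := this
    _ = (R-1)⁻¹ * 2 := by norm_num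
  have Tmain : Tendsto (fun R : ℝ => ∫ t in (0:ℝ)..R, Real.sin ((t - 1) * π / 2) ^ 2 / (t ^ 2 - 1) ^ 2)
      atTop (𝓝 (∫ t in Ioi (0:ℝ), Real.sin ((t - 1) * π / 2) ^ 2 / (t ^ 2 - 1) ^ 2)) :=
    intervalIntegral_tendsto_integral_Ioi 0 int_f tendsto_id
  have Tcomb : Tendsto (fun R : ℝ => ∫ t in (0:ℝ)..R, Real.sin ((t - 1) * π / 2) ^ 2 / (t ^ 2 - 1) ^ 2)
      atTop (𝓝 ((Jg + Kg + 0)/4)) := by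
    simp only [interval_eq]
    exact ((T1.add T2).add T3).div_const 4
  have hval := tendsto_nhds_unique Tmain Tcomb
  -- now compute Jg + Kg = 2 * (π^2/4)
  have hGdef : (fun u : ℝ => auxS u / u^2) = auxG := rfl
  have hJval : (∫ u in Ioi (0:ℝ), auxG u) = π^2/4 := by rw [← hGdef]; exact val_g
  have hdisj1 : Disjoint (Ioc (-1:ℝ) 0) (Ioi (0:ℝ)) := by
    rw [Set.disjoint_left]
    rintro x hx hx'
    exact absurd hx.2 (not_le.mpr hx')
  have hdisj2 : Disjoint (Ioc (0:ℝ) 1) (Ioi (1:ℝ)) := by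
    rw [Set.disjoint_left]
    rintro x hx hx'
    exact absurd hx.2 (not_le.mpr hx')
  have hsplit1 : Jg = (∫ u in Ioc (-1:ℝ) 0, auxG u) + ∫ u in Ioi (0:ℝ), auxG u := by
    rw [hJg, show Ioi (-1:ℝ) = Ioc (-1) 0 ∪ Ioi 0 by rw [Ioc_union_Ioi_eq_Ioi (by norm_num : (-1:ℝ) ≤ 0)]]
    exact setIntegral_union hdisj1 measurableSet_Ioi
      (intOn_of_bdd auxG_meas auxG_abs_le _ _) int_g'
  have hsplit2 : (∫ u in Ioi (0:ℝ), auxG u) = (∫ u in Ioc (0:ℝ) 1, auxG u) + Kg := by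
    rw [hKg, show Ioi (0:ℝ) = Ioc 0 1 ∪ Ioi 1 by rw [Ioc_union_Ioi_eq_Ioi zero_le_one]]
    exact setIntegral_union hdisj2 measurableSet_Ioi
      (intOn_of_bdd auxG_meas auxG_abs_le _ _) int_g_Ioi1
  have hCD : (∫ u in Ioc (-1:ℝ) 0, auxG u) = ∫ u in Ioc (0:ℝ) 1, auxG u := by
    have h1 : (∫ u in Ioc (-1:ℝ) 0, auxG u) = ∫ u in (-1:ℝ)..0, auxG u :=
      (intervalIntegral.integral_of_le (by norm_num : (-1:ℝ) ≤ 0)).symm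
    have h2 : (∫ u in Ioc (0:ℝ) 1, auxG u) = ∫ u in (0:ℝ)..1, auxG u :=
      (intervalIntegral.integral_of_le zero_le_one).symm
    rw [h1, h2, g_reflect]
  rw [hval]
  rw [hJval] at hsplit2
  linarith

/-- The improper integral `∫_0^∞ sin²((t-1)π/2)/(t²-1)² dt` converges and equals `π²/8`. -/
theorem stmt_2 :
    IntegrableOn
      (fun t : ℝ => Real.sin ((t - 1) * Real.pi / 2) ^ 2 / (t ^ 2 - 1) ^ 2)
      (Set.Ioi 0) ∧
    (∫ t in Set.Ioi (0 : ℝ),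
        Real.sin ((t - 1) * Real.pi / 2) ^ 2 / (t ^ 2 - 1) ^ 2) =
      Real.pi ^ 2 / 8 := by
  exact ⟨int_f, main_value⟩
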